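/- Let n ≥ 1 and let T : L²(ℝⁿ, ℂ) → L²(ℝⁿ, ℂ) be a compact continuous linear operator (with respect to Lebesgue measure). Then for every ε > 0 there exists R > 0 such that for every u ∈ L²(ℝⁿ, ℂ), the L²-norm of the truncation of T u outside the ball of radius R is at most ε‖u‖; that is, eLpNorm ({x : ℝⁿ | R < ‖x‖}.indicator of (a representative of) T u) 2 ≤ ENNReal.ofReal (ε · ‖u‖). -/

import Mathlib

open MeasureTheory
open scoped ENNReal

private lemma tail_mono_aux {α : Type*} [MeasurableSpace α] {μ : Measure α} {f : α → ℂ}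
    {s t : Set α} (hst : s ⊆ t) :
    eLpNorm (s.indicator f) 2 μ ≤ eLpNorm (t.indicator f) 2 μ := by
  refine eLpNorm_mono fun x => ?_
  by_cases hx : x ∈ s
  · rw [Set.indicator_of_mem hx, Set.indicator_of_mem (hst hx)]
  · rw [Set.indicator_of_notMem hx]
    simp

private lemma tail_small_aux {n : ℕ}
    (g : Lp ℂ 2 (volume : Measure (EuclideanSpace ℝ (Fin n)))) {η : ℝ} (hη : 0 < η) :
    ∃ R : ℝ, 0 < R ∧
      eLpNorm ({x : EuclideanSpace ℝ (Fin n) | R < ‖x‖}.indicator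
        (g : EuclideanSpace ℝ (Fin n) → ℂ)) 2 volume ≤ ENNReal.ofReal η := by
  have hfin : ∫⁻ x, ((‖g x‖₊ : ℝ≥0∞) ^ (2 : ℝ)) ∂(volume : Measure (EuclideanSpace ℝ (Fin n)))
      ≠ ∞ := by
    have h := Lp.eLpNorm_lt_top g
    rw [eLpNorm_eq_lintegral_rpow_enorm_toReal (by norm_num) (by norm_num)] at h
    intro hcon
    simp only [ENNReal.toReal_ofNat, enorm_eq_nnnorm] at h hcon
    rw [hcon] at h
    simp at h
  set ν : Measure (EuclideanSpace ℝ (Fin n)) :=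
    (volume : Measure (EuclideanSpace ℝ (Fin n))).withDensity
      (fun x => (‖g x‖₊ : ℝ≥0∞) ^ (2 : ℝ)) with hν
  have hmeas : ∀ R : ℝ, MeasurableSet {x : EuclideanSpace ℝ (Fin n) | R < ‖x‖} := fun R =>
    measurableSet_lt measurable_const measurable_norm
  have hanti : Antitone (fun k : ℕ => {x : EuclideanSpace ℝ (Fin n) | (k : ℝ) < ‖x‖}) := by
    intro i j hij x hx
    simp only [Set.mem_setOf_eq] at hx ⊢
    exact lt_of_le_of_lt (by exact_mod_cast hij) hx
  have hiInter : ⋂ k : ℕ, {x : EuclideanSpace ℝ (Fin n) | (k : ℝ) < ‖x‖} = ∅ := by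
    ext x
    simp only [Set.mem_iInter, Set.mem_empty_iff_false, iff_false, not_forall,
      Set.mem_setOf_eq, not_lt]
    obtain ⟨k, hk⟩ := exists_nat_gt ‖x‖
    exact ⟨k, hk.le⟩
  have hνfin : ∀ k : ℕ, ν {x : EuclideanSpace ℝ (Fin n) | (k : ℝ) < ‖x‖} ≠ ∞ := by
    intro k
    refine ne_of_lt (lt_of_le_of_lt ?_ hfin.lt_top)
    rw [hν, withDensity_apply _ (hmeas _)]
    exact setLIntegral_le_lintegral _ _
  have htend : Filter.Tendsto
      (fun k : ℕ => ν {x : EuclideanSpace ℝ (Fin n) | (k : ℝ) < ‖x‖})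
      Filter.atTop (nhds 0) := by
    have h := tendsto_measure_iInter_atTop (μ := ν)
      (s := fun k : ℕ => {x : EuclideanSpace ℝ (Fin n) | (k : ℝ) < ‖x‖})
      (fun k => (hmeas (k : ℝ)).nullMeasurableSet) hanti ⟨0, hνfin 0⟩
    rwa [hiInter, measure_empty] at h
  have hpos : (0 : ℝ≥0∞) < ENNReal.ofReal η ^ (2 : ℝ) :=
    ENNReal.rpow_pos (by simpa using hη) ENNReal.ofReal_ne_top
  obtain ⟨k, hk1, hk2⟩ :=
    ((htend.eventually (gt_mem_nhds hpos)).and (Filter.eventually_ge_atTop 1)).exists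
  refine ⟨(k : ℝ), by exact_mod_cast hk2, ?_⟩
  have hcalc : eLpNorm ({x : EuclideanSpace ℝ (Fin n) | (k : ℝ) < ‖x‖}.indicator
        (g : EuclideanSpace ℝ (Fin n) → ℂ)) 2 volume
      = (ν {x : EuclideanSpace ℝ (Fin n) | (k : ℝ) < ‖x‖}) ^ ((1 : ℝ) / 2) := by
    rw [eLpNorm_indicator_eq_eLpNorm_restrict (hmeas _),
      eLpNorm_eq_lintegral_rpow_enorm_toReal (by norm_num) (by norm_num),
      hν, withDensity_apply _ (hmeas _)]
    norm_num [enorm_eq_nnnorm]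
  rw [hcalc]
  calc (ν {x : EuclideanSpace ℝ (Fin n) | (k : ℝ) < ‖x‖}) ^ ((1 : ℝ) / 2)
      ≤ (ENNReal.ofReal η ^ (2 : ℝ)) ^ ((1 : ℝ) / 2) := by
        exact ENNReal.rpow_le_rpow hk1.le (by norm_num)
    _ = ENNReal.ofReal η := by
        rw [← ENNReal.rpow_mul]
        norm_num

theorem compactOperator_localization
    {n : ℕ} (hn : 1 ≤ n)
    (T : Lp ℂ 2 (volume : Measure (EuclideanSpace ℝ (Fin n))) →L[ℂ]
         Lp ℂ 2 (volume : Measure (EuclideanSpace ℝ (Fin n))))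
    (hT : IsCompactOperator T) :
    ∀ ε > (0 : ℝ), ∃ R > (0 : ℝ),
      ∀ u : Lp ℂ 2 (volume : Measure (EuclideanSpace ℝ (Fin n))),
        eLpNorm ({x : EuclideanSpace ℝ (Fin n) | R < ‖x‖}.indicator
            (T u : EuclideanSpace ℝ (Fin n) → ℂ)) 2 volume ≤
          ENNReal.ofReal (ε * ‖u‖) := by
  intro ε hε
  obtain ⟨K, hKc, hKn⟩ := hT
  obtain ⟨δ, hδ, hball⟩ := Metric.mem_nhds_iff.1 hKn
  set ε' : ℝ := ε * δ / 4 with hε'def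
  have hε' : 0 < ε' := by positivity
  obtain ⟨t, htfin, htcov⟩ := Metric.totallyBounded_iff.1 hKc.totallyBounded ε' hε'
  -- choose tail radii for each element of the net
  have hch : ∀ y : Lp ℂ 2 (volume : Measure (EuclideanSpace ℝ (Fin n))), ∃ R : ℝ, 0 < R ∧
      eLpNorm ({x : EuclideanSpace ℝ (Fin n) | R < ‖x‖}.indicator (y : EuclideanSpace ℝ (Fin n) → ℂ)) 2 (volume : Measure (EuclideanSpace ℝ (Fin n))) ≤ ENNReal.ofReal ε' :=
    fun y => tail_small_aux y hε'
  choose Rf hRfpos hRf using hch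
  set F := htfin.toFinset with hF
  set R : ℝ := 1 + ∑ y ∈ F, Rf y with hRdef
  have hsum_nonneg : (0 : ℝ) ≤ ∑ y ∈ F, Rf y :=
    Finset.sum_nonneg fun y _ => (hRfpos y).le
  have hRpos : 0 < R := by positivity
  have hRge : ∀ y ∈ F, Rf y ≤ R := by
    intro y hy
    have h1 : Rf y ≤ ∑ z ∈ F, Rf z :=
      Finset.single_le_sum (fun z _ => (hRfpos z).le) hy
    linarith
  have hmeas : MeasurableSet {x : EuclideanSpace ℝ (Fin n) | R < ‖x‖} :=
    measurableSet_lt measurable_const measurable_norm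
  refine ⟨R, hRpos, fun u => ?_⟩
  by_cases hu : u = 0
  · subst hu
    have h0 : (T 0 : EuclideanSpace ℝ (Fin n) → ℂ) =ᵐ[(volume : Measure (EuclideanSpace ℝ (Fin n)))] 0 := by
      rw [map_zero]; exact Lp.coeFn_zero ℂ 2 _
    rw [eLpNorm_congr_ae (h0.indicator (s := {x : EuclideanSpace ℝ (Fin n) | R < ‖x‖}))]
    simp
  -- nonzero case
  have hnu : 0 < ‖u‖ := norm_pos_iff.2 hu
  set c : ℝ := δ / (2 * ‖u‖) with hcdef
  have hc : 0 < c := by positivity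
  set w : Lp ℂ 2 (volume : Measure (EuclideanSpace ℝ (Fin n))) := ((c : ℂ)) • u with hw
  have hwballmem : w ∈ Metric.ball (0 : Lp ℂ 2 (volume : Measure (EuclideanSpace ℝ (Fin n)))) δ := by
    rw [mem_ball_zero_iff, hw, norm_smul]
    have : ‖(c : ℂ)‖ = c := by
      rw [Complex.norm_real, Real.norm_eq_abs, abs_of_pos hc]
    rw [this, hcdef]
    rw [div_mul_eq_mul_div, mul_comm]
    rw [div_lt_iff₀ (by positivity)]
    nlinarith
  have hTwK : T w ∈ K := hball hwballmem
  obtain ⟨y, hyt, hyball⟩ := Set.mem_iUnion₂.1 (htcov hTwK)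
  have hyF : y ∈ F := (Set.Finite.mem_toFinset htfin).2 hyt
  have hdist : ‖T w - y‖ < ε' := by
    rw [← dist_eq_norm]
    exact Metric.mem_ball.1 hyball
  -- tail of T w is small
  have htailTw : eLpNorm ({x : EuclideanSpace ℝ (Fin n) | R < ‖x‖}.indicator (T w : EuclideanSpace ℝ (Fin n) → ℂ)) 2 (volume : Measure (EuclideanSpace ℝ (Fin n)))
      ≤ ENNReal.ofReal ε' + ENNReal.ofReal ε' := by
    have h1 : (T w : EuclideanSpace ℝ (Fin n) → ℂ) =ᵐ[(volume : Measure (EuclideanSpace ℝ (Fin n)))] ((T w - y : Lp ℂ 2 (volume : Measure (EuclideanSpace ℝ (Fin n)))) : EuclideanSpace ℝ (Fin n) → ℂ) + (y : EuclideanSpace ℝ (Fin n) → ℂ) := by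
      filter_upwards [Lp.coeFn_sub (T w) y] with x hx
      simp only [Pi.add_apply, hx, Pi.sub_apply]
      ring
    rw [eLpNorm_congr_ae (h1.indicator (s := {x : EuclideanSpace ℝ (Fin n) | R < ‖x‖})), Set.indicator_add']
    refine le_trans (eLpNorm_add_le
      ((Lp.aestronglyMeasurable _).indicator hmeas)
      ((Lp.aestronglyMeasurable _).indicator hmeas) one_le_two) ?_
    gcongr
    · refine le_trans (eLpNorm_indicator_le _) ?_
      have hfin' := Lp.eLpNorm_lt_top (T w - y)
      rw [← ENNReal.ofReal_toReal hfin'.ne]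
      refine ENNReal.ofReal_le_ofReal ?_
      rw [← Lp.norm_def]
      exact hdist.le
    · refine le_trans (tail_mono_aux (t := {x : EuclideanSpace ℝ (Fin n) | Rf y < ‖x‖}) ?_) (hRf y)
      intro x hx
      exact lt_of_le_of_lt (hRge y hyF) hx
  -- relate tail of T u to tail of T w
  have hcinv : u = ((c : ℂ))⁻¹ • w := by
    rw [hw, smul_smul, inv_mul_cancel₀ (by exact_mod_cast hc.ne'), one_smul]
  have hTu : T u = ((c : ℂ))⁻¹ • T w := by
    rw [hcinv]; exact T.map_smul _ _
  have h2 : (T u : EuclideanSpace ℝ (Fin n) → ℂ) =ᵐ[(volume : Measure (EuclideanSpace ℝ (Fin n)))] ((c : ℂ))⁻¹ • (T w : EuclideanSpace ℝ (Fin n) → ℂ) := by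
    rw [hTu]
    exact Lp.coeFn_smul _ _
  calc eLpNorm ({x : EuclideanSpace ℝ (Fin n) | R < ‖x‖}.indicator (T u : EuclideanSpace ℝ (Fin n) → ℂ)) 2 (volume : Measure (EuclideanSpace ℝ (Fin n)))
      = eLpNorm ({x : EuclideanSpace ℝ (Fin n) | R < ‖x‖}.indicator (((c : ℂ))⁻¹ • (T w : EuclideanSpace ℝ (Fin n) → ℂ))) 2 (volume : Measure (EuclideanSpace ℝ (Fin n))) :=
        eLpNorm_congr_ae h2.indicator
    _ = (‖((c : ℂ))⁻¹‖₊ : ℝ≥0∞) * eLpNorm ({x : EuclideanSpace ℝ (Fin n) | R < ‖x‖}.indicator (T w : EuclideanSpace ℝ (Fin n) → ℂ)) 2 (volume : Measure (EuclideanSpace ℝ (Fin n))) := by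
        rw [← enorm_eq_nnnorm, ← eLpNorm_const_smul]
        congr 1
        funext x
        by_cases hx : x ∈ {x : EuclideanSpace ℝ (Fin n) | R < ‖x‖} <;>
          simp [Set.indicator_of_mem, Set.indicator_of_notMem, hx]
    _ ≤ (‖((c : ℂ))⁻¹‖₊ : ℝ≥0∞) * (ENNReal.ofReal ε' + ENNReal.ofReal ε') := by
        gcongr
    _ = ENNReal.ofReal (ε * ‖u‖) := by
        rw [← enorm_eq_nnnorm, ← ofReal_norm, ← ENNReal.ofReal_add hε'.le hε'.le,
          ← ENNReal.ofReal_mul (norm_nonneg _)]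
        congr 1
        have hnc : ‖((c : ℂ))⁻¹‖ = c⁻¹ := by
          rw [norm_inv, Complex.norm_real, Real.norm_eq_abs, abs_of_pos hc]
        rw [hnc, hcdef, hε'def]
        field_simp
        ring
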